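/- Let $\mathcal{X}=(\boldsymbol{x}_n)$ be a basis of a $p$-Banach space $\mathbb{X}$ with bounded-oscillation unconditionality function $\Phi$ (so $\|S_A(f)\| \le \Phi(t)\|f\|$ whenever $\operatorname{osc}(f,A) \le 1/t$). Then for all $0 < a \le b \le 1$, $\Phi(ab)^p \le (1-b)^p\Phi(b)^p + \Phi(a)^p\big(1 + (1-b)^p\Phi(b)^p\big)$. -/

import Mathlib

private lemma eq_zero_of_rpow_nonpos {x p : ℝ} (hx : 0 ≤ x) (hp : 0 < p)
    (h : x ^ p ≤ 0) : x = 0 := by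
  rcases hx.eq_or_lt with h' | h'
  · exact h'.symm
  · exact absurd h (not_le.2 (Real.rpow_pos_of_pos h' p))

theorem stmt11 {X : Type*} [AddCommGroup X] [Module ℂ X] (p : ℝ) (hp : 0 < p) (hp1 : p ≤ 1)
    (N : X → ℝ) (hN0 : ∀ f, 0 ≤ N f)
    (hNp : ∀ f g, N (f + g) ^ p ≤ N f ^ p + N g ^ p)
    (hNh : ∀ (a : ℂ) (f : X), N (a • f) = ‖a‖ * N f)
    (e : ℕ → X) (φ : ℕ → X →ₗ[ℂ] ℂ)
    (hbi : ∀ n k, φ n (e k) = if n = k then 1 else 0)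
    (Φ : ℝ → ℝ)
    (hΦ : ∀ t ∈ Set.Ioc (0:ℝ) 1, ∀ (f : X) (A : Finset ℕ) (hA : A.Nonempty),
      (A.sup' hA fun n => ‖φ n f‖)
        ≤ (1/t) * (A.inf' hA fun n => ‖φ n f‖) →
      N (∑ n ∈ A, φ n f • e n) ≤ Φ t * N f)
    (a b : ℝ) (ha : 0 < a) (hab : a ≤ b) (hb1 : b ≤ 1) :
    ∀ (f : X) (A : Finset ℕ) (hA : A.Nonempty),
      (A.sup' hA fun n => ‖φ n f‖)
        ≤ (1/(a*b)) * (A.inf' hA fun n => ‖φ n f‖) →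
      N (∑ n ∈ A, φ n f • e n) ≤
        ((1 - b) ^ p * Φ b ^ p + Φ a ^ p * (1 + (1 - b) ^ p * Φ b ^ p)) ^ (1/p) * N f := by
  intro f A hA hosc
  have hb0 : 0 < b := lt_of_lt_of_le ha hab
  have ha1 : a ≤ 1 := hab.trans hb1
  have h1b : (0:ℝ) ≤ 1 - b := by linarith
  set M : ℝ := A.sup' hA fun n => ‖φ n f‖ with hM
  set m : ℝ := A.inf' hA fun n => ‖φ n f‖ with hm
  have hM0 : 0 ≤ M := by
    rw [hM]
    obtain ⟨n0, hn0⟩ := hA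
    exact le_trans (norm_nonneg _)
      (Finset.le_sup' (fun n => ‖φ n f‖) hn0)
  set D : Finset ℕ := A.filter (fun n => b * M ≤ ‖φ n f‖) with hDdef
  have hDA : D ⊆ A := Finset.filter_subset _ _
  have hD : D.Nonempty := by
    obtain ⟨n0, hn0, hn0M⟩ := Finset.exists_mem_eq_sup' hA fun n => ‖φ n f‖
    rw [← hM] at hn0M
    exact ⟨n0, Finset.mem_filter.2 ⟨hn0, by rw [← hn0M]; nlinarith⟩⟩
  set SD : X := ∑ n ∈ D, φ n f • e n with hSDdef
  set g : X := f - ((1 - b : ℝ) : ℂ) • SD with hgdef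
  have habsb : ‖((1 - b : ℝ) : ℂ)‖ = 1 - b := by
    rw [Complex.norm_real, Real.norm_eq_abs, abs_of_nonneg h1b]
  -- coefficients of SD
  have hφSD : ∀ n, φ n SD = if n ∈ D then φ n f else 0 := by
    intro n
    rw [hSDdef, map_sum]
    simp only [map_smul, hbi, smul_eq_mul, mul_ite, mul_one, mul_zero]
    exact Finset.sum_ite_eq D n fun k => φ k f
  have hφg : ∀ n, φ n g = φ n f - ((1 - b : ℝ) : ℂ) * (if n ∈ D then φ n f else 0) := by
    intro n
    rw [hgdef, map_sub, map_smul, smul_eq_mul, hφSD]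
  -- bounds for coefficients of g on A
  have hgub : ∀ n ∈ A, ‖φ n g‖ ≤ b * M := by
    intro n hn
    rw [hφg]
    by_cases hnD : n ∈ D
    · simp only [hnD, if_true]
      have h1 : φ n f - ((1 - b : ℝ) : ℂ) * φ n f = ((b : ℝ) : ℂ) * φ n f := by
        push_cast; ring
      rw [h1, norm_mul, Complex.norm_real, Real.norm_eq_abs, abs_of_nonneg hb0.le]
      exact mul_le_mul_of_nonneg_left (Finset.le_sup' (fun n => ‖φ n f‖) hn) hb0.le
    · simp only [hnD, if_false, mul_zero, sub_zero]
      have h2 := Finset.mem_filter.not.1 hnD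
      push_neg at h2
      exact (h2 hn).le
  have hglb : ∀ n ∈ A, a * (b * M) ≤ ‖φ n g‖ := by
    intro n hn
    rw [hφg]
    by_cases hnD : n ∈ D
    · simp only [hnD, if_true]
      have h1 : φ n f - ((1 - b : ℝ) : ℂ) * φ n f = ((b : ℝ) : ℂ) * φ n f := by
        push_cast; ring
      rw [h1, norm_mul, Complex.norm_real, Real.norm_eq_abs, abs_of_nonneg hb0.le]
      have h2 : b * M ≤ ‖φ n f‖ := (Finset.mem_filter.1 hnD).2
      have h3 : b * (b * M) ≤ b * ‖φ n f‖ :=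
        mul_le_mul_of_nonneg_left h2 hb0.le
      nlinarith [mul_nonneg hb0.le hM0]
    · simp only [hnD, if_false, mul_zero, sub_zero]
      have h2 : m ≤ ‖φ n f‖ := Finset.inf'_le _ hn
      have h3 : a * b * M ≤ m := by
        have hab0 : 0 < a * b := mul_pos ha hb0
        rw [one_div_mul_eq_div, le_div_iff₀ hab0] at hosc
        calc a * b * M = M * (a * b) := by ring
          _ ≤ m := hosc
      nlinarith
  -- oscillation condition for g on A
  have hoscg : (A.sup' hA fun n => ‖φ n g‖)
      ≤ (1/a) * (A.inf' hA fun n => ‖φ n g‖) := by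
    have h1 : (A.sup' hA fun n => ‖φ n g‖) ≤ b * M := Finset.sup'_le _ _ hgub
    have h2 : a * (b * M) ≤ A.inf' hA fun n => ‖φ n g‖ := Finset.le_inf' _ _ hglb
    calc (A.sup' hA fun n => ‖φ n g‖) ≤ b * M := h1
      _ = (1/a) * (a * (b * M)) := by field_simp
      _ ≤ (1/a) * (A.inf' hA fun n => ‖φ n g‖) :=
          mul_le_mul_of_nonneg_left h2 (by positivity)
  -- oscillation conditions for f on D
  have hDsup : (D.sup' hD fun n => ‖φ n f‖) ≤ M := by
    rw [hM]
    exact Finset.sup'_le _ _ fun n hn =>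
      Finset.le_sup' (fun n => ‖φ n f‖) (hDA hn)
  have hDinf : b * M ≤ D.inf' hD fun n => ‖φ n f‖ :=
    Finset.le_inf' _ _ fun n hn => (Finset.mem_filter.1 hn).2
  have hoscDb : (D.sup' hD fun n => ‖φ n f‖)
      ≤ (1/b) * (D.inf' hD fun n => ‖φ n f‖) := by
    calc (D.sup' hD fun n => ‖φ n f‖) ≤ M := hDsup
      _ = (1/b) * (b * M) := by field_simp
      _ ≤ (1/b) * _ := mul_le_mul_of_nonneg_left hDinf (by positivity)
  have hoscDa : (D.sup' hD fun n => ‖φ n f‖)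
      ≤ (1/a) * (D.inf' hD fun n => ‖φ n f‖) := by
    have h1b' : 1/b ≤ 1/a := one_div_le_one_div_of_le ha hab
    have hinf0 : 0 ≤ D.inf' hD fun n => ‖φ n f‖ :=
      le_trans (by positivity) hDinf
    calc (D.sup' hD fun n => ‖φ n f‖)
        ≤ (1/b) * (D.inf' hD fun n => ‖φ n f‖) := hoscDb
      _ ≤ (1/a) * (D.inf' hD fun n => ‖φ n f‖) :=
          mul_le_mul_of_nonneg_right h1b' hinf0
  have hSDb : N SD ≤ Φ b * N f := hΦ b ⟨hb0, hb1⟩ f D hD hoscDb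
  have hSDa : N SD ≤ Φ a * N f := hΦ a ⟨ha, ha1⟩ f D hD hoscDa
  set SAg : X := ∑ n ∈ A, φ n g • e n with hSAgdef
  have hSAgN : N SAg ≤ Φ a * N g := hΦ a ⟨ha, ha1⟩ g A hA hoscg
  -- S_A g = S_A f - (1-b) • SD
  have key : ∀ n, φ n g • e n
      = φ n f • e n - ((1 - b : ℝ) : ℂ) • (if n ∈ D then φ n f • e n else 0) := by
    intro n
    rw [hφg n, sub_smul, mul_smul]
    congr 1
    split <;> simp
  have hSg : SAg = (∑ n ∈ A, φ n f • e n) - ((1 - b : ℝ) : ℂ) • SD := by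
    rw [hSAgdef]
    simp only [key]
    rw [Finset.sum_sub_distrib, ← Finset.smul_sum, Finset.sum_ite_mem,
      Finset.inter_eq_right.2 hDA, ← hSDdef]
  have hSf_eq : (∑ n ∈ A, φ n f • e n) = SAg + ((1 - b : ℝ) : ℂ) • SD := by
    rw [hSg]; abel
  -- p-norm splittings
  have hNcSD : N (((1 - b : ℝ) : ℂ) • SD) = (1 - b) * N SD := by
    rw [hNh, habsb]
  have hsplit1 : N (∑ n ∈ A, φ n f • e n) ^ p ≤ N SAg ^ p + ((1 - b) * N SD) ^ p := by
    rw [hSf_eq, ← hNcSD]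
    exact hNp _ _
  have hg_eq : f = g + ((1 - b : ℝ) : ℂ) • SD := by rw [hgdef]; abel
  have hsplit2 : N f ^ p ≤ N g ^ p + ((1 - b) * N SD) ^ p := by
    rw [← hNcSD]
    calc N f ^ p = N (g + ((1 - b : ℝ) : ℂ) • SD) ^ p := by rw [← hg_eq]
      _ ≤ _ := hNp _ _
  have hsplit3 : N g ^ p ≤ N f ^ p + ((1 - b) * N SD) ^ p := by
    have hg_eq' : g = f + ((-(1 - b) : ℝ) : ℂ) • SD := by
      rw [hgdef]
      push_cast
      rw [neg_smul]
      abel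
    have habs' : ‖((-(1 - b) : ℝ) : ℂ)‖ = 1 - b := by
      rw [Complex.norm_real, Real.norm_eq_abs, abs_neg, abs_of_nonneg h1b]
    calc N g ^ p = N (f + ((-(1 - b) : ℝ) : ℂ) • SD) ^ p := by rw [← hg_eq']
      _ ≤ N f ^ p + N (((-(1 - b) : ℝ) : ℂ) • SD) ^ p := hNp _ _
      _ = N f ^ p + ((1 - b) * N SD) ^ p := by rw [hNh, habs']
  rcases (hN0 f).eq_or_lt with hq | hq
  · -- degenerate case N f = 0
    have hSD0 : N SD = 0 :=
      le_antisymm (by rw [← hq] at hSDb; simpa using hSDb) (hN0 _)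
    have hNg0 : N g = 0 := by
      refine eq_zero_of_rpow_nonpos (hN0 g) hp ?_
      have : N f ^ p + ((1 - b) * N SD) ^ p = 0 := by
        rw [← hq, hSD0, mul_zero, Real.zero_rpow hp.ne']
        ring
      linarith [hsplit3]
    have hSAg0 : N SAg = 0 :=
      le_antisymm (by rw [hNg0, mul_zero] at hSAgN; exact hSAgN) (hN0 _)
    have hNSf0 : N (∑ n ∈ A, φ n f • e n) = 0 := by
      refine eq_zero_of_rpow_nonpos (hN0 _) hp ?_
      have : N SAg ^ p + ((1 - b) * N SD) ^ p = 0 := by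
        rw [hSAg0, hSD0, mul_zero, Real.zero_rpow hp.ne']
        ring
      linarith [hsplit1]
    rw [← hq, mul_zero, hNSf0]
  · -- main case N f > 0
    have hΦb0 : 0 ≤ Φ b := by nlinarith [hN0 SD]
    have hΦa0 : 0 ≤ Φ a := by nlinarith [hN0 SD]
    have hSDp : ((1 - b) * N SD) ^ p ≤ (1 - b) ^ p * Φ b ^ p * N f ^ p := by
      have h1 : (1 - b) * N SD ≤ (1 - b) * (Φ b * N f) :=
        mul_le_mul_of_nonneg_left hSDb h1b
      calc ((1 - b) * N SD) ^ p ≤ ((1 - b) * (Φ b * N f)) ^ p :=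
            Real.rpow_le_rpow (mul_nonneg h1b (hN0 _)) h1 hp.le
        _ = (1 - b) ^ p * Φ b ^ p * N f ^ p := by
            rw [Real.mul_rpow h1b (mul_nonneg hΦb0 (hN0 f)),
              Real.mul_rpow hΦb0 (hN0 f), mul_assoc]
    have hNgp : N g ^ p ≤ (1 + (1 - b) ^ p * Φ b ^ p) * N f ^ p := by
      calc N g ^ p ≤ N f ^ p + ((1 - b) * N SD) ^ p := hsplit3
        _ ≤ N f ^ p + (1 - b) ^ p * Φ b ^ p * N f ^ p := by linarith
        _ = (1 + (1 - b) ^ p * Φ b ^ p) * N f ^ p := by ring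
    have hSAgp : N SAg ^ p ≤ Φ a ^ p * ((1 + (1 - b) ^ p * Φ b ^ p) * N f ^ p) := by
      calc N SAg ^ p ≤ (Φ a * N g) ^ p := Real.rpow_le_rpow (hN0 _) hSAgN hp.le
        _ = Φ a ^ p * N g ^ p := Real.mul_rpow hΦa0 (hN0 g)
        _ ≤ Φ a ^ p * ((1 + (1 - b) ^ p * Φ b ^ p) * N f ^ p) :=
            mul_le_mul_of_nonneg_left hNgp (Real.rpow_nonneg hΦa0 p)
    have h4 : 0 ≤ (1 - b) ^ p * Φ b ^ p :=
      mul_nonneg (Real.rpow_nonneg h1b p) (Real.rpow_nonneg hΦb0 p)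
    have hC0 : 0 ≤ (1 - b) ^ p * Φ b ^ p + Φ a ^ p * (1 + (1 - b) ^ p * Φ b ^ p) :=
      add_nonneg h4 (mul_nonneg (Real.rpow_nonneg hΦa0 p) (by linarith))
    have hmain : N (∑ n ∈ A, φ n f • e n) ^ p
        ≤ ((1 - b) ^ p * Φ b ^ p + Φ a ^ p * (1 + (1 - b) ^ p * Φ b ^ p)) * N f ^ p := by
      calc N (∑ n ∈ A, φ n f • e n) ^ p ≤ N SAg ^ p + ((1 - b) * N SD) ^ p := hsplit1
        _ ≤ Φ a ^ p * ((1 + (1 - b) ^ p * Φ b ^ p) * N f ^ p)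
              + (1 - b) ^ p * Φ b ^ p * N f ^ p := by linarith
        _ = ((1 - b) ^ p * Φ b ^ p + Φ a ^ p * (1 + (1 - b) ^ p * Φ b ^ p)) * N f ^ p := by
            ring
    calc N (∑ n ∈ A, φ n f • e n)
        = (N (∑ n ∈ A, φ n f • e n) ^ p) ^ (1/p) := by
          rw [one_div, Real.rpow_rpow_inv (hN0 _) hp.ne']
      _ ≤ (((1 - b) ^ p * Φ b ^ p + Φ a ^ p * (1 + (1 - b) ^ p * Φ b ^ p)) * N f ^ p)
            ^ (1/p) :=
          Real.rpow_le_rpow (Real.rpow_nonneg (hN0 _) p) hmain (by positivity)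
      _ = ((1 - b) ^ p * Φ b ^ p + Φ a ^ p * (1 + (1 - b) ^ p * Φ b ^ p)) ^ (1/p) * N f := by
          rw [Real.mul_rpow hC0 (Real.rpow_nonneg (hN0 f) p), one_div,
            Real.rpow_rpow_inv (hN0 f) hp.ne']
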